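/- arXiv:0912.1251 — 2 statements merged into one kernel-verified Lean document; each statement's English description precedes it below -/
import Mathlib

section
/- Let A be a Hermitian n×n complex matrix and B a Hermitian n×n complex matrix. Then the function f(h) = log Tr exp(A + h B) is convex in h ∈ ℝ. -/
open Matrix

section LogTraceExpAux

variable {n : ℕ}

/-- The trace of the exponential of a Hermitian matrix is the sum of the exponentials of its
eigenvalues. -/
private lemma trace_exp_eq (M : Matrix (Fin n) (Fin n) ℂ) (hM : M.IsHermitian) :
    (NormedSpace.exp M).trace = ∑ i, (Real.exp (hM.eigenvalues i) : ℂ) := by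
  set V : Matrix (Fin n) (Fin n) ℂ := ↑hM.eigenvectorUnitary with hVdef
  have hV : V ∈ Matrix.unitaryGroup (Fin n) ℂ := hM.eigenvectorUnitary.2
  have h1 : V * star V = 1 := Matrix.mem_unitaryGroup_iff.mp hV
  have h1' : star V * V = 1 := Matrix.mem_unitaryGroup_iff'.mp hV
  have hinv : V⁻¹ = star V := Matrix.inv_eq_right_inv h1
  have hU : IsUnit V := ⟨⟨V, star V, h1, h1'⟩, rfl⟩
  calc (NormedSpace.exp M).trace
      = (NormedSpace.exp (V * diagonal (RCLike.ofReal ∘ hM.eigenvalues) * V⁻¹)).trace := by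
        rw [hinv]
        conv_lhs => rw [hM.spectral_theorem]
        rfl
    _ = (V * NormedSpace.exp (diagonal (RCLike.ofReal ∘ hM.eigenvalues)) * V⁻¹).trace := by
        rw [Matrix.exp_conj V _ hU]
    _ = (NormedSpace.exp (diagonal (RCLike.ofReal ∘ hM.eigenvalues))).trace := by
        rw [Matrix.trace_mul_comm, ← Matrix.mul_assoc, hinv, h1', Matrix.one_mul]
    _ = ∑ i, (Real.exp (hM.eigenvalues i) : ℂ) := by
        rw [Matrix.exp_diagonal, Matrix.trace_diagonal]
        refine Finset.sum_congr rfl fun i _ => ?_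
        rw [Pi.coe_exp, ← Complex.exp_eq_exp_ℂ]
        simp [Function.comp, ← Complex.ofReal_exp]

/-- Peierls' inequality: for a Hermitian matrix `X` and a unitary `W`, the sum of the
exponentials of the diagonal entries of `W* X W` is at most `Tr exp X`. -/
private lemma peierls (X : Matrix (Fin n) (Fin n) ℂ) (hX : X.IsHermitian)
    (W : Matrix.unitaryGroup (Fin n) ℂ) :
    ∑ i, Real.exp (((star (W : Matrix (Fin n) (Fin n) ℂ) * X * W) i i).re)
      ≤ ∑ i, Real.exp (hX.eigenvalues i) := by
  classical
  set V : Matrix (Fin n) (Fin n) ℂ := ↑hX.eigenvectorUnitary with hVdef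
  set C : Matrix (Fin n) (Fin n) ℂ := star (W : Matrix (Fin n) (Fin n) ℂ) * V with hCdef
  have hC : C ∈ Matrix.unitaryGroup (Fin n) ℂ :=
    mul_mem (Unitary.star_mem W.2) hX.eigenvectorUnitary.2
  have hrow : ∀ i, ∑ j, Complex.normSq (C i j) = 1 := by
    intro i
    have h1 : C * star C = 1 := Matrix.mem_unitaryGroup_iff.mp hC
    have := congrFun (congrFun h1 i) i
    rw [Matrix.mul_apply, Matrix.one_apply_eq] at this
    have : ((∑ j, Complex.normSq (C i j) : ℝ) : ℂ) = ((1:ℝ) : ℂ) := by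
      push_cast
      rw [← this]
      refine Finset.sum_congr rfl fun j _ => ?_
      rw [Matrix.star_apply, Complex.star_def, Complex.mul_conj]
    exact_mod_cast this
  have hcol : ∀ j, ∑ i, Complex.normSq (C i j) = 1 := by
    intro j
    have h1 : star C * C = 1 := Matrix.mem_unitaryGroup_iff'.mp hC
    have := congrFun (congrFun h1 j) j
    rw [Matrix.mul_apply, Matrix.one_apply_eq] at this
    have : ((∑ i, Complex.normSq (C i j) : ℝ) : ℂ) = ((1:ℝ) : ℂ) := by
      push_cast
      rw [← this]
      refine Finset.sum_congr rfl fun i _ => ?_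
      rw [Matrix.star_apply, Complex.star_def, ← Complex.normSq_eq_conj_mul_self]
    exact_mod_cast this
  have hdiag : ∀ i, ((star (W : Matrix (Fin n) (Fin n) ℂ) * X * W) i i).re
      = ∑ j, Complex.normSq (C i j) * hX.eigenvalues j := by
    intro i
    have hXs : star (W : Matrix (Fin n) (Fin n) ℂ) * X * (W : Matrix (Fin n) (Fin n) ℂ)
        = C * diagonal (RCLike.ofReal ∘ hX.eigenvalues) * star C := by
      conv_lhs => rw [hX.spectral_theorem]
      rw [hCdef, StarMul.star_mul, star_star]
      simp only [hVdef, Matrix.mul_assoc, Unitary.conjStarAlgAut_apply]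
    rw [hXs, Matrix.mul_apply, Complex.re_sum]
    refine Finset.sum_congr rfl fun j _ => ?_
    rw [Matrix.mul_diagonal, Matrix.star_apply]
    have : C i j * (RCLike.ofReal ∘ hX.eigenvalues) j * star (C i j)
        = ((Complex.normSq (C i j) * hX.eigenvalues j : ℝ) : ℂ) := by
      push_cast
      rw [Complex.star_def, mul_comm (C i j), mul_assoc, Complex.mul_conj]
      simp [Function.comp, mul_comm]
    rw [this, Complex.ofReal_re]
  calc ∑ i, Real.exp (((star (W : Matrix (Fin n) (Fin n) ℂ) * X * W) i i).re)
      ≤ ∑ i, ∑ j, Complex.normSq (C i j) * Real.exp (hX.eigenvalues j) := by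
        refine Finset.sum_le_sum fun i _ => ?_
        rw [hdiag i]
        have := convexOn_exp.map_sum_le (t := Finset.univ)
          (w := fun j => Complex.normSq (C i j)) (p := fun j => hX.eigenvalues j)
          (fun j _ => Complex.normSq_nonneg _) (hrow i) (fun j _ => Set.mem_univ _)
        simpa [smul_eq_mul] using this
    _ = ∑ j, Real.exp (hX.eigenvalues j) := by
        rw [Finset.sum_comm]
        refine Finset.sum_congr rfl fun j _ => ?_
        rw [← Finset.sum_mul, hcol j, one_mul]

/-- Two-function Hölder inequality for finite sums of positive reals. -/
private lemma holder_sum {ι : Type*} [Fintype ι] (f g : ι → ℝ) (hf : ∀ i, 0 < f i)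
    (hg : ∀ i, 0 < g i) {a b : ℝ} (ha : 0 ≤ a) (hb : 0 ≤ b) (hab : a + b = 1)
    (hS : 0 < ∑ i, f i) (hT : 0 < ∑ i, g i) :
    ∑ i, f i ^ a * g i ^ b ≤ (∑ i, f i) ^ a * (∑ i, g i) ^ b := by
  set S := ∑ i, f i
  set T := ∑ i, g i
  have hSa : (0:ℝ) < S ^ a := Real.rpow_pos_of_pos hS a
  have hTb : (0:ℝ) < T ^ b := Real.rpow_pos_of_pos hT b
  calc ∑ i, f i ^ a * g i ^ b
      = S ^ a * T ^ b * ∑ i, (f i / S) ^ a * (g i / T) ^ b := by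
        rw [Finset.mul_sum]
        refine Finset.sum_congr rfl fun i _ => ?_
        rw [Real.div_rpow (hf i).le hS.le, Real.div_rpow (hg i).le hT.le]
        field_simp
    _ ≤ S ^ a * T ^ b * ∑ i, (a * (f i / S) + b * (g i / T)) := by
        refine mul_le_mul_of_nonneg_left (Finset.sum_le_sum fun i _ => ?_)
          (by positivity)
        exact Real.geom_mean_le_arith_mean2_weighted ha hb
          (div_nonneg (hf i).le hS.le) (div_nonneg (hg i).le hT.le) hab
    _ = S ^ a * T ^ b := by
        rw [Finset.sum_add_distrib, ← Finset.mul_sum, ← Finset.mul_sum, ← Finset.sum_div,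
          ← Finset.sum_div, div_self hS.ne', div_self hT.ne', mul_one, mul_one, hab, mul_one]

end LogTraceExpAux

/-- For Hermitian matrices `A`, `B`, the function
`h ↦ log Tr exp(A + h B)` is convex on `ℝ`. (The trace of the exponential of a Hermitian
matrix is a positive real; we take its real part.) -/
theorem log_trace_exp_convex {n : ℕ} (A B : Matrix (Fin n) (Fin n) ℂ)
    (hA : A.IsHermitian) (hB : B.IsHermitian) :
    ConvexOn ℝ Set.univ
      (fun h : ℝ => Real.log ((NormedSpace.exp (A + (h : ℂ) • B)).trace.re)) := by
  classical
  rcases Nat.eq_zero_or_pos n with hn | hn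
  · subst hn
    have : (fun h : ℝ => Real.log ((NormedSpace.exp (A + (h : ℂ) • B)).trace.re))
        = fun _ : ℝ => (0:ℝ) := by
      funext h
      simp [Matrix.trace]
    rw [this]
    exact convexOn_const _ convex_univ
  haveI : Nonempty (Fin n) := Fin.pos_iff_nonempty.mp hn
  have hherm : ∀ h : ℝ, (A + (h : ℂ) • B).IsHermitian := by
    intro h
    refine hA.add ?_
    show ((h : ℂ) • B)ᴴ = (h : ℂ) • B
    rw [Matrix.conjTranspose_smul, hB.eq, Complex.star_def, Complex.conj_ofReal]
  have key : ∀ h : ℝ,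
      (NormedSpace.exp (A + (h : ℂ) • B)).trace.re = ∑ i, Real.exp ((hherm h).eigenvalues i) := by
    intro h
    rw [trace_exp_eq _ (hherm h), ← Complex.ofReal_sum, Complex.ofReal_re]
  have hpos : ∀ h : ℝ, 0 < (NormedSpace.exp (A + (h : ℂ) • B)).trace.re := by
    intro h
    rw [key h]
    exact Finset.sum_pos (fun i _ => Real.exp_pos _) Finset.univ_nonempty
  refine ⟨convex_univ, fun x _ y _ a b ha hb hab => ?_⟩
  simp only [smul_eq_mul]
  set X : Matrix (Fin n) (Fin n) ℂ := A + (x : ℂ) • B with hXdef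
  set Y : Matrix (Fin n) (Fin n) ℂ := A + (y : ℂ) • B with hYdef
  set Z : Matrix (Fin n) (Fin n) ℂ := A + ((a * x + b * y : ℝ) : ℂ) • B with hZdef
  have hab' : (a : ℂ) + (b : ℂ) = 1 := by exact_mod_cast congrArg (fun t : ℝ => (t : ℂ)) hab
  have hZeq : Z = (a : ℂ) • X + (b : ℂ) • Y := by
    ext i j
    simp only [hZdef, hXdef, hYdef, Matrix.add_apply, Matrix.smul_apply, smul_eq_mul]
    push_cast
    linear_combination (-(A i j)) * hab'
  set hXh := hherm x
  set hYh := hherm y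
  set hZh := hherm (a * x + b * y)
  set W := hZh.eigenvectorUnitary with hWdef
  set α : Fin n → ℝ := fun i => ((star (W : Matrix (Fin n) (Fin n) ℂ) * X * W) i i).re with hαdef
  set β : Fin n → ℝ := fun i => ((star (W : Matrix (Fin n) (Fin n) ℂ) * Y * W) i i).re with hβdef
  have hsplit : ∀ i, hZh.eigenvalues i = a * α i + b * β i := by
    intro i
    have h1 : star (W : Matrix (Fin n) (Fin n) ℂ) * Z * W
        = (a : ℂ) • (star (W : Matrix (Fin n) (Fin n) ℂ) * X * W)
          + (b : ℂ) • (star (W : Matrix (Fin n) (Fin n) ℂ) * Y * W) := by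
      rw [hZeq]
      simp only [Matrix.mul_add, Matrix.add_mul, Matrix.mul_smul, Matrix.smul_mul]
    have h2 : (star (W : Matrix (Fin n) (Fin n) ℂ) * Z * W) i i = ((hZh.eigenvalues i : ℝ) : ℂ) := by
      have h5 := hZh.conjStarAlgAut_star_eigenvectorUnitary
      simp only [Unitary.conjStarAlgAut_apply, Unitary.coe_star, star_star] at h5
      rw [show star (W : Matrix (Fin n) (Fin n) ℂ) * Z * (W : Matrix (Fin n) (Fin n) ℂ)
        = diagonal (RCLike.ofReal ∘ hZh.eigenvalues) from h5]
      simp only [Matrix.diagonal_apply_eq, Function.comp]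
      rfl
    have h3 := (h2.symm.trans (congrFun (congrFun h1 i) i))
    have h4 := congrArg Complex.re h3
    simpa [Complex.add_re, Matrix.add_apply, Matrix.smul_apply, smul_eq_mul, Complex.mul_re,
      Complex.ofReal_re, Complex.ofReal_im, hαdef, hβdef] using h4
  have hXsum : 0 < ∑ i, Real.exp (α i) := Finset.sum_pos (fun i _ => Real.exp_pos _)
    Finset.univ_nonempty
  have hYsum : 0 < ∑ i, Real.exp (β i) := Finset.sum_pos (fun i _ => Real.exp_pos _)
    Finset.univ_nonempty
  have chain : (NormedSpace.exp Z).trace.re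
      ≤ ((NormedSpace.exp X).trace.re) ^ a * ((NormedSpace.exp Y).trace.re) ^ b := by
    calc (NormedSpace.exp Z).trace.re
        = ∑ i, Real.exp (hZh.eigenvalues i) := key _
      _ = ∑ i, Real.exp (α i) ^ a * Real.exp (β i) ^ b := by
          refine Finset.sum_congr rfl fun i _ => ?_
          rw [hsplit i, Real.exp_add, mul_comm a _, mul_comm b _, Real.exp_mul, Real.exp_mul]
      _ ≤ (∑ i, Real.exp (α i)) ^ a * (∑ i, Real.exp (β i)) ^ b :=
          holder_sum _ _ (fun i => Real.exp_pos _) (fun i => Real.exp_pos _) ha hb hab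
            hXsum hYsum
      _ ≤ ((NormedSpace.exp X).trace.re) ^ a * ((NormedSpace.exp Y).trace.re) ^ b := by
          have p1 : ∑ i, Real.exp (α i) ≤ (NormedSpace.exp X).trace.re := by
            rw [key x]; exact peierls X hXh W
          have p2 : ∑ i, Real.exp (β i) ≤ (NormedSpace.exp Y).trace.re := by
            rw [key y]; exact peierls Y hYh W
          exact mul_le_mul (Real.rpow_le_rpow hXsum.le p1 ha)
            (Real.rpow_le_rpow hYsum.le p2 hb)
            (Real.rpow_nonneg hYsum.le b)
            (Real.rpow_nonneg (hpos x).le a)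
  calc Real.log ((NormedSpace.exp Z).trace.re)
      ≤ Real.log (((NormedSpace.exp X).trace.re) ^ a * ((NormedSpace.exp Y).trace.re) ^ b) :=
        Real.log_le_log (hpos _) chain
    _ = a * Real.log ((NormedSpace.exp X).trace.re)
        + b * Real.log ((NormedSpace.exp Y).trace.re) := by
        rw [Real.log_mul (Real.rpow_pos_of_pos (hpos x) a).ne'
          (Real.rpow_pos_of_pos (hpos y) b).ne',
          Real.log_rpow (hpos x), Real.log_rpow (hpos y)]
end

section
/- Let A, B be Hermitian n×n complex matrices. Then Tr e^{A+B} ≥ e^{Tr(B ρ_A)} Tr e^{A}, where ρ_A = e^A / Tr e^A; equivalently, log Tr e^{A+B} - log Tr e^{A} ≥ Tr(B e^A)/Tr e^A (the Peierls–Bogoliubov inequality). -/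
open Matrix

namespace PBaux

variable {n : ℕ}

lemma exp_unitary_conj (U D : Matrix (Fin n) (Fin n) ℂ)
    (h1 : star U * U = 1) (h2 : U * star U = 1) :
    NormedSpace.exp (U * D * star U) = U * NormedSpace.exp D * star U := by
  let u : (Matrix (Fin n) (Fin n) ℂ)ˣ := ⟨U, star U, h2, h1⟩
  exact Matrix.exp_units_conj u D

lemma exp_hermitian (M : Matrix (Fin n) (Fin n) ℂ) (hM : M.IsHermitian) :
    NormedSpace.exp M =
      (hM.eigenvectorUnitary : Matrix (Fin n) (Fin n) ℂ) *
        diagonal (fun k => (Real.exp (hM.eigenvalues k) : ℂ)) *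
        star (hM.eigenvectorUnitary : Matrix (Fin n) (Fin n) ℂ) := by
  conv_lhs => rw [hM.spectral_theorem, Unitary.conjStarAlgAut_apply]
  rw [exp_unitary_conj _ _ (Matrix.UnitaryGroup.star_mul_self _)
      ((Matrix.mem_unitaryGroup_iff).mp (hM.eigenvectorUnitary).2),
    Matrix.exp_diagonal, Pi.exp_def]
  have hd : ∀ i, NormedSpace.exp ((RCLike.ofReal ∘ hM.eigenvalues) i)
      = ((Real.exp (hM.eigenvalues i) : ℝ) : ℂ) := by
    intro i
    show NormedSpace.exp ((hM.eigenvalues i : ℂ)) = _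
    rw [← Complex.exp_eq_exp_ℂ, ← Complex.ofReal_exp]
  simp only [hd]

lemma conj_diag_re (U : Matrix (Fin n) (Fin n) ℂ) (f : Fin n → ℝ) (i : Fin n) :
    ((U * diagonal (fun k => (f k : ℂ)) * star U) i i).re
      = ∑ k, Complex.normSq (U i k) * f k := by
  rw [Matrix.mul_apply, Complex.re_sum]
  refine Finset.sum_congr rfl fun k _ => ?_
  rw [Matrix.mul_diagonal]
  show ((U i k * (f k : ℂ)) * star (U i k)).re = _
  rw [Complex.star_def, mul_right_comm, Complex.mul_conj, ← Complex.ofReal_mul, Complex.ofReal_re]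


lemma peierls (M : Matrix (Fin n) (Fin n) ℂ) (hM : M.IsHermitian) :
    ∑ i, Real.exp ((M i i).re) ≤ (NormedSpace.exp M).trace.re := by
  set U := (hM.eigenvectorUnitary : Matrix (Fin n) (Fin n) ℂ) with hU
  have hU2 : U * star U = 1 := (Matrix.mem_unitaryGroup_iff).mp (hM.eigenvectorUnitary).2
  have hrow : ∀ i, ∑ k, Complex.normSq (U i k) = 1 := by
    intro i
    have h3 : (U * star U) i i = 1 := by rw [hU2]; exact Matrix.one_apply_eq i
    rw [Matrix.mul_apply] at h3
    have h4 := congrArg Complex.re h3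
    rw [Complex.re_sum] at h4
    have h5 : ∀ k, (U i k * star U k i).re = Complex.normSq (U i k) := by
      intro k
      rw [Matrix.star_apply, Complex.star_def, Complex.mul_conj, Complex.ofReal_re]
    simp only [h5, Complex.one_re] at h4
    exact h4
  have hMspec : M = U * diagonal (fun k => ((hM.eigenvalues k : ℝ) : ℂ)) * star U :=
    hM.spectral_theorem
  have hdiag : ∀ i, (M i i).re = ∑ k, Complex.normSq (U i k) * hM.eigenvalues k := by
    intro i
    conv_lhs => rw [hMspec]
    exact conj_diag_re U _ i
  calc ∑ i, Real.exp ((M i i).re)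
      ≤ ∑ i, ∑ k, Complex.normSq (U i k) * Real.exp (hM.eigenvalues k) := by
        refine Finset.sum_le_sum fun i _ => ?_
        rw [hdiag i]
        have := convexOn_exp.map_sum_le (t := Finset.univ)
          (w := fun k => Complex.normSq (U i k)) (p := fun k => hM.eigenvalues k)
          (fun k _ => Complex.normSq_nonneg _) (hrow i) (fun k _ => Set.mem_univ _)
        simpa [smul_eq_mul] using this
    _ = (NormedSpace.exp M).trace.re := by
        rw [exp_hermitian M hM, Matrix.trace, Complex.re_sum]
        exact Finset.sum_congr rfl fun i _ => (conj_diag_re U _ i).symm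

end PBaux

/-- The Peierls–Bogoliubov inequality: for Hermitian matrices `A`, `B`,
`Tr e^{A+B} ≥ e^{Tr(B ρ_A)} Tr e^A` where `ρ_A = e^A / Tr e^A`; equivalently
`log Tr e^{A+B} - log Tr e^A ≥ Tr(B e^A) / Tr e^A`. -/
theorem peierls_bogoliubov {n : ℕ} (A B : Matrix (Fin n) (Fin n) ℂ)
    (hA : A.IsHermitian) (hB : B.IsHermitian) :
    (NormedSpace.exp (A + B)).trace.re ≥
        Real.exp ((B * NormedSpace.exp A).trace.re / (NormedSpace.exp A).trace.re) *
          (NormedSpace.exp A).trace.re ∧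
      Real.log ((NormedSpace.exp (A + B)).trace.re) -
          Real.log ((NormedSpace.exp A).trace.re) ≥
        (B * NormedSpace.exp A).trace.re / (NormedSpace.exp A).trace.re := by
  rcases Nat.eq_zero_or_pos n with hn | hn
  · subst hn
    have h0 : ∀ M : Matrix (Fin 0) (Fin 0) ℂ, M.trace = 0 := by
      intro M; simp [Matrix.trace]
    rw [h0, h0]
    norm_num
  haveI : Nonempty (Fin n) := ⟨⟨0, hn⟩⟩
  have hAB : (A + B).IsHermitian := hA.add hB
  set U := (hA.eigenvectorUnitary : Matrix (Fin n) (Fin n) ℂ) with hU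
  set a := hA.eigenvalues with ha
  set b : Fin n → ℝ := fun i => ((star U * B * U) i i).re with hb
  have hU1 : star U * U = 1 := Matrix.UnitaryGroup.star_mul_self _
  have hU2 : U * star U = 1 := (Matrix.mem_unitaryGroup_iff).mp (hA.eigenvectorUnitary).2
  set Z := ∑ i, Real.exp (a i) with hZ
  set T := ∑ i, b i * Real.exp (a i) with hT
  have hZpos : 0 < Z := Finset.sum_pos (fun i _ => Real.exp_pos _) Finset.univ_nonempty
  -- trace of exp A
  have hZtrace : (NormedSpace.exp A).trace.re = Z := by
    rw [PBaux.exp_hermitian A hA, Matrix.trace_mul_cycle, hU1, Matrix.one_mul,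
      Matrix.trace_diagonal, Complex.re_sum]
    exact Finset.sum_congr rfl fun i _ => Complex.ofReal_re _
  -- trace of B * exp A
  have hTtrace : (B * NormedSpace.exp A).trace.re = T := by
    rw [PBaux.exp_hermitian A hA, ← Matrix.mul_assoc, Matrix.trace_mul_comm,
      ← Matrix.mul_assoc, ← Matrix.mul_assoc]
    rw [Matrix.trace, Complex.re_sum]
    refine Finset.sum_congr rfl fun i _ => ?_
    rw [Matrix.diag_apply, Matrix.mul_diagonal, mul_comm, Complex.re_ofReal_mul]
    simp only [hb]
    ring
  -- conjugated A + B
  set E := star U * (A + B) * U with hE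
  have hEherm : E.IsHermitian := by
    rw [hE, Matrix.star_eq_conjTranspose]
    exact Matrix.isHermitian_conjTranspose_mul_mul U hAB
  have htraceE : (NormedSpace.exp (A + B)).trace = (NormedSpace.exp E).trace := by
    have hconj := PBaux.exp_unitary_conj (star U) (A + B)
      (by rw [star_star]; exact hU2) (by rw [star_star]; exact hU1)
    rw [star_star] at hconj
    rw [hE, hconj, Matrix.trace_mul_cycle, hU2, Matrix.one_mul]
  have hEdiag : ∀ i, (E i i).re = a i + b i := by
    intro i
    have : E = diagonal (RCLike.ofReal ∘ a) + star U * B * U := by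
      rw [hE, Matrix.mul_add, Matrix.add_mul, (show star U * A * U = diagonal (RCLike.ofReal ∘ a) by have h := hA.conjStarAlgAut_star_eigenvectorUnitary; rw [Unitary.conjStarAlgAut_apply, Unitary.coe_star, star_star] at h; exact h)]
    rw [this, Matrix.add_apply, Complex.add_re, Matrix.diagonal_apply_eq]
    simp [hb]
  -- Peierls step
  have key1 : ∑ i, Real.exp (a i + b i) ≤ (NormedSpace.exp (A + B)).trace.re := by
    have := PBaux.peierls E hEherm
    rw [htraceE]
    refine le_trans (le_of_eq ?_) this
    exact Finset.sum_congr rfl fun i _ => by rw [hEdiag i]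
  -- Jensen step
  have hwsum : ∑ i, Real.exp (a i) / Z = 1 := by
    rw [← Finset.sum_div, ← hZ, div_self hZpos.ne']
  have hjensen := convexOn_exp.map_sum_le (t := Finset.univ)
    (w := fun i => Real.exp (a i) / Z) (p := b)
    (fun i _ => by positivity) hwsum (fun i _ => Set.mem_univ _)
  simp only [smul_eq_mul] at hjensen
  have harg : ∑ i, Real.exp (a i) / Z * b i = T / Z := by
    rw [hT, Finset.sum_div]
    exact Finset.sum_congr rfl fun i _ => by ring
  have hrhs : ∑ i, Real.exp (a i) / Z * Real.exp (b i) = (∑ i, Real.exp (a i + b i)) / Z := by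
    rw [Finset.sum_div]
    refine Finset.sum_congr rfl fun i _ => ?_
    rw [Real.exp_add]; ring
  rw [harg, hrhs] at hjensen
  have key2 : Real.exp (T / Z) * Z ≤ ∑ i, Real.exp (a i + b i) := by
    rw [← le_div_iff₀ hZpos]
    exact hjensen
  have main : Real.exp (T / Z) * Z ≤ (NormedSpace.exp (A + B)).trace.re :=
    le_trans key2 key1
  have hpos : 0 < Real.exp (T / Z) * Z := by positivity
  constructor
  · rw [hZtrace, hTtrace]
    exact main
  · rw [hZtrace, hTtrace]
    have hlog := Real.log_le_log hpos main
    rw [Real.log_mul (Real.exp_ne_zero _) hZpos.ne', Real.log_exp] at hlog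
    linarith
end
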